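/- Let f(s) = a₄s⁴ + a₃s³ + a₂s² + a₁s + a₀ be a real quartic with all coefficients aᵢ > 0 satisfying a₁(a₂a₃ − a₁a₄) ≥ a₀a₃². Then f has a root on the imaginary axis if and only if a₁(a₂a₃ − a₁a₄) = a₀a₃², and in that case the imaginary-axis roots form a simple conjugate pair ±jp with p = √(a₀a₃/(a₂a₃ − a₁a₄)). -/

import Mathlib

lemma quartic_decomp (a₀ a₁ a₂ a₃ a₄ ω : ℝ) :
    (a₄ : ℂ) * ((ω : ℂ) * Complex.I) ^ 4 +
    (a₃ : ℂ) * ((ω : ℂ) * Complex.I) ^ 3 +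
    (a₂ : ℂ) * ((ω : ℂ) * Complex.I) ^ 2 +
    (a₁ : ℂ) * ((ω : ℂ) * Complex.I) + (a₀ : ℂ) = 0 ↔
    (a₄ * ω^4 - a₂ * ω^2 + a₀ = 0 ∧ a₁ * ω - a₃ * ω^3 = 0) := by
  have h : (a₄ : ℂ) * ((ω : ℂ) * Complex.I) ^ 4 +
    (a₃ : ℂ) * ((ω : ℂ) * Complex.I) ^ 3 +
    (a₂ : ℂ) * ((ω : ℂ) * Complex.I) ^ 2 +
    (a₁ : ℂ) * ((ω : ℂ) * Complex.I) + (a₀ : ℂ) =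
    ((a₄ * ω^4 - a₂ * ω^2 + a₀ : ℝ) : ℂ) + ((a₁ * ω - a₃ * ω^3 : ℝ) : ℂ) * Complex.I := by
    push_cast
    ring_nf
    simp only [show Complex.I ^ 4 = 1 by rw [show (4:ℕ)=2*2 from rfl, pow_mul, Complex.I_sq]; ring,
      show Complex.I ^ 3 = -Complex.I by rw [pow_succ, Complex.I_sq]; ring, Complex.I_sq]
    ring
  rw [h, Complex.ext_iff]
  simp [← Complex.ofReal_pow]

lemma deriv_decomp (a₁ a₂ a₃ a₄ ω : ℝ) :
    4 * (a₄ : ℂ) * ((ω : ℂ) * Complex.I) ^ 3 +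
    3 * (a₃ : ℂ) * ((ω : ℂ) * Complex.I) ^ 2 +
    2 * (a₂ : ℂ) * ((ω : ℂ) * Complex.I) + (a₁ : ℂ) = 0 ↔
    (a₁ - 3 * a₃ * ω^2 = 0 ∧ 2 * a₂ * ω - 4 * a₄ * ω^3 = 0) := by
  have h : 4 * (a₄ : ℂ) * ((ω : ℂ) * Complex.I) ^ 3 +
    3 * (a₃ : ℂ) * ((ω : ℂ) * Complex.I) ^ 2 +
    2 * (a₂ : ℂ) * ((ω : ℂ) * Complex.I) + (a₁ : ℂ) =
    ((a₁ - 3 * a₃ * ω^2 : ℝ) : ℂ) + ((2 * a₂ * ω - 4 * a₄ * ω^3 : ℝ) : ℂ) * Complex.I := by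
    push_cast
    ring_nf
    simp only [show Complex.I ^ 3 = -Complex.I by rw [pow_succ, Complex.I_sq]; ring,
      Complex.I_sq]
    ring
  rw [h, Complex.ext_iff]
  simp [← Complex.ofReal_pow]

lemma root_of_crit (a₀ a₁ a₂ a₃ a₄ ω : ℝ) (h₃ : 0 < a₃)
    (hω2 : a₃ * ω ^ 2 = a₁)
    (hEq : a₁ * (a₂ * a₃ - a₁ * a₄) = a₀ * a₃ ^ 2) :
    a₄ * ω^4 - a₂ * ω^2 + a₀ = 0 ∧ a₁ * ω - a₃ * ω^3 = 0 := by
  constructor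
  · have h9 : a₃^2 * (a₄ * ω^4 - a₂ * ω^2 + a₀) = 0 := by
      linear_combination (a₄*(a₃*ω^2+a₁) - a₂*a₃) * hω2 - hEq
    rcases mul_eq_zero.mp h9 with h | h
    · exact absurd h (pow_ne_zero 2 h₃.ne')
    · exact h
  · linear_combination (-ω) * hω2

/-- A quartic with positive coefficients satisfying
`a₁(a₂a₃ - a₁a₄) ≥ a₀a₃²` has a root on the imaginary axis iff
`a₁(a₂a₃ - a₁a₄) = a₀a₃²`, in which case the imaginary-axis roots are exactly
the simple conjugate pair `±jp` with `p = √(a₀a₃/(a₂a₃ - a₁a₄))`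
(simplicity expressed by nonvanishing of the derivative). -/
theorem stmt_2 (a₀ a₁ a₂ a₃ a₄ : ℝ)
    (h₀ : 0 < a₀) (h₁ : 0 < a₁) (h₂ : 0 < a₂) (h₃ : 0 < a₃) (h₄ : 0 < a₄)
    (hRH : a₀ * a₃ ^ 2 ≤ a₁ * (a₂ * a₃ - a₁ * a₄)) :
    ((∃ ω : ℝ, (a₄ : ℂ) * ((ω : ℂ) * Complex.I) ^ 4 +
        (a₃ : ℂ) * ((ω : ℂ) * Complex.I) ^ 3 +
        (a₂ : ℂ) * ((ω : ℂ) * Complex.I) ^ 2 +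
        (a₁ : ℂ) * ((ω : ℂ) * Complex.I) + (a₀ : ℂ) = 0) ↔
      a₁ * (a₂ * a₃ - a₁ * a₄) = a₀ * a₃ ^ 2) ∧
    (a₁ * (a₂ * a₃ - a₁ * a₄) = a₀ * a₃ ^ 2 →
      ∀ ω : ℝ,
        ((a₄ : ℂ) * ((ω : ℂ) * Complex.I) ^ 4 +
          (a₃ : ℂ) * ((ω : ℂ) * Complex.I) ^ 3 +
          (a₂ : ℂ) * ((ω : ℂ) * Complex.I) ^ 2 +
          (a₁ : ℂ) * ((ω : ℂ) * Complex.I) + (a₀ : ℂ) = 0 ↔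
          (ω = Real.sqrt (a₀ * a₃ / (a₂ * a₃ - a₁ * a₄)) ∨
           ω = -Real.sqrt (a₀ * a₃ / (a₂ * a₃ - a₁ * a₄)))) ∧
        ((a₄ : ℂ) * ((ω : ℂ) * Complex.I) ^ 4 +
          (a₃ : ℂ) * ((ω : ℂ) * Complex.I) ^ 3 +
          (a₂ : ℂ) * ((ω : ℂ) * Complex.I) ^ 2 +
          (a₁ : ℂ) * ((ω : ℂ) * Complex.I) + (a₀ : ℂ) = 0 →
          4 * (a₄ : ℂ) * ((ω : ℂ) * Complex.I) ^ 3 +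
          3 * (a₃ : ℂ) * ((ω : ℂ) * Complex.I) ^ 2 +
          2 * (a₂ : ℂ) * ((ω : ℂ) * Complex.I) + (a₁ : ℂ) ≠ 0)) := by
  have hD : 0 < a₂ * a₃ - a₁ * a₄ := by nlinarith [mul_pos h₀ (pow_pos h₃ 2)]
  -- a key consequence of a root: a₃ ω² = a₁
  have key : ∀ ω : ℝ, a₄ * ω^4 - a₂ * ω^2 + a₀ = 0 → a₁ * ω - a₃ * ω^3 = 0 →
      a₃ * ω ^ 2 = a₁ := by
    intro ω hre him
    have hω : ω ≠ 0 := by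
      rintro rfl
      simp at hre
      nlinarith
    have : ω * (a₁ - a₃ * ω^2) = 0 := by linear_combination him
    rcases mul_eq_zero.mp this with h | h
    · exact absurd h hω
    · linarith
  constructor
  · constructor
    · rintro ⟨ω, heq⟩
      obtain ⟨hre, him⟩ := (quartic_decomp a₀ a₁ a₂ a₃ a₄ ω).mp heq
      have hω2 := key ω hre him
      linear_combination (a₄*(a₁ + a₃*ω^2) - a₂*a₃) * hω2 - a₃^2 * hre
    · intro hEq
      refine ⟨Real.sqrt (a₁ / a₃), (quartic_decomp a₀ a₁ a₂ a₃ a₄ _).mpr ?_⟩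
      apply root_of_crit a₀ a₁ a₂ a₃ a₄ _ h₃ _ hEq
      rw [Real.sq_sqrt (by positivity)]
      field_simp
  · intro hEq ω
    set p := Real.sqrt (a₀ * a₃ / (a₂ * a₃ - a₁ * a₄)) with hp
    have hp2 : a₃ * p ^ 2 = a₁ := by
      rw [hp, Real.sq_sqrt (by positivity)]
      field_simp
      have hD' : a₃ * a₂ - a₁ * a₄ ≠ 0 := ne_of_gt (by linarith)
      rw [div_eq_iff hD']
      linarith
    constructor
    · rw [quartic_decomp]
      constructor
      · rintro ⟨hre, him⟩
        have hω2 := key ω hre him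
        have : (ω - p) * (ω + p) = 0 := by
          have : a₃ * (ω - p) * (ω + p) = 0 := by linear_combination hω2 - hp2
          rcases mul_eq_zero.mp (by linear_combination this :
            a₃ * ((ω - p) * (ω + p)) = 0) with h | h
          · exact absurd h h₃.ne'
          · exact h
        rcases mul_eq_zero.mp this with h | h
        · left; linarith
        · right; linarith
      · rintro (rfl | rfl)
        · exact root_of_crit a₀ a₁ a₂ a₃ a₄ p h₃ hp2 hEq
        · have : a₃ * (-p) ^ 2 = a₁ := by rw [neg_pow]; simpa using hp2
          exact root_of_crit a₀ a₁ a₂ a₃ a₄ (-p) h₃ this hEq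
    · intro heq hder
      obtain ⟨hre, him⟩ := (quartic_decomp a₀ a₁ a₂ a₃ a₄ ω).mp heq
      have hω2 := key ω hre him
      obtain ⟨hd1, _⟩ := (deriv_decomp a₁ a₂ a₃ a₄ ω).mp hder
      nlinarith
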